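/- arXiv:2502.04567 — 3 statements merged into one kernel-verified Lean document; each statement's English description precedes it below -/
import Mathlib

section
/- Let Y be a finite type, μ a strictly positive probability mass function on Y, r : Y → ℝ, Z = ∑_y μ(y)·exp(r(y)), and p(y) = μ(y)·exp(r(y))/Z. For y₀,...,y_M ∈ Y, let Ẑ(y₀,...,y_M) = (1/(M+1))·∑_{i=0}^M exp(r(y_i)). If y₀ is drawn from p and y₁,...,y_M are drawn i.i.d. from μ, then the joint density of (y₀,...,y_M) marginalized over the uniform random index z (i.e., the symmetrized mixture ∑_{i=0}^M (1/(M+1)) p(y_i) ∏_{j≠i} μ(y_j)) equals (Ẑ(y₀,...,y_M)/Z)·∏_{j=0}^M μ(y_j). -/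
theorem stmt_8 {Y : Type*} [Fintype Y] (M : ℕ) (μ : Y → ℝ)
    (hμ : ∀ y, 0 < μ y) (hμsum : ∑ y, μ y = 1) (r : Y → ℝ)
    (y : Fin (M + 1) → Y) :
    ∑ i, (1 / (M + 1 : ℝ)) *
        (μ (y i) * Real.exp (r (y i)) / ∑ y', μ y' * Real.exp (r y')) *
        ∏ j ∈ Finset.univ.erase i, μ (y j)
      = ((1 / (M + 1 : ℝ)) * ∑ i, Real.exp (r (y i))) /
          (∑ y', μ y' * Real.exp (r y')) * ∏ j, μ (y j) := by
  rw [Finset.mul_sum, Finset.sum_div, Finset.sum_mul]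
  refine Finset.sum_congr rfl fun i _ => ?_
  rw [← Finset.mul_prod_erase Finset.univ (fun j => μ (y j)) (Finset.mem_univ i)]
  ring
end

section
/- Let Y be a finite type, μ a strictly positive probability mass function on Y, and r_θ : ℝ → Y → ℝ differentiable in the scalar parameter θ. Define Z(θ) = ∑_y μ(y)·exp(r_θ(y)), p_θ(y) = μ(y)·exp(r_θ(y))/Z(θ), and for a tuple (y₀,...,y_M) ∈ Y^{M+1} define Ẑ_θ(y₀,...,y_M) = (1/(M+1))·∑_{i=0}^M exp(r_θ(y_i)). Then the expectation of d/dθ log Ẑ_θ(y₀,...,y_M), where y₀ ~ p_θ and y₁,...,y_M i.i.d. ~ μ, equals d/dθ log Z(θ). That is, ∑_{y₀,...,y_M} p_θ(y₀)·∏_{i=1}^M μ(y_i) · (d/dθ) log Ẑ_θ(y₀,...,y_M) = (d/dθ) log Z(θ). -/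
open Finset

lemma aux_marg {Y : Type*} [Fintype Y] {n : ℕ} (μ g : Y → ℝ)
    (hμsum : ∑ y, μ y = 1) (j : Fin n) :
    ∑ y : Fin n → Y, (∏ i, μ (y i)) * g (y j) = ∑ z, μ z * g z := by
  classical
  have key : ∀ y : Fin n → Y,
      (∏ i, μ (y i)) * g (y j) = ∏ i, (if i = j then μ (y i) * g (y i) else μ (y i)) := by
    intro y
    rw [← Finset.mul_prod_erase Finset.univ (fun i => if i = j then μ (y i) * g (y i) else μ (y i)) (Finset.mem_univ j),
        ← Finset.mul_prod_erase Finset.univ (fun i => μ (y i)) (Finset.mem_univ j)]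
    simp only [eq_self_iff_true, if_true]
    rw [Finset.prod_congr rfl (fun i hi => if_neg (Finset.ne_of_mem_erase hi))]
    ring
  calc ∑ y : Fin n → Y, (∏ i, μ (y i)) * g (y j)
      = ∑ y : Fin n → Y, ∏ i, (fun (i : Fin n) (z : Y) => if i = j then μ z * g z else μ z) i (y i) :=
        Finset.sum_congr rfl fun y _ => key y
    _ = ∏ i, ∑ z, (fun (i : Fin n) (z : Y) => if i = j then μ z * g z else μ z) i z :=
        (Fintype.prod_sum (fun (i : Fin n) (z : Y) => if i = j then μ z * g z else μ z)).symm
    _ = ∑ z, μ z * g z := by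
        rw [← Finset.mul_prod_erase Finset.univ
          (fun i => ∑ z, (fun (i : Fin n) (z : Y) => if i = j then μ z * g z else μ z) i z)
          (Finset.mem_univ j)]
        simp only [eq_self_iff_true, if_true]
        have h1 : ∀ i ∈ Finset.univ.erase j, (∑ z, (if i = j then μ z * g z else μ z)) = (1:ℝ) := by
          intro i hi
          simp [if_neg (Finset.ne_of_mem_erase hi), hμsum]
        rw [Finset.prod_congr rfl h1, Finset.prod_const_one, mul_one]

lemma aux_swap {Y : Type*} [Fintype Y] {n : ℕ} (μ e d : Y → ℝ) (j : Fin (n+1)) :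
    ∑ y : Fin (n+1) → Y, (∏ i, μ (y i)) * e (y j) * ((∑ i, d (y i) * e (y i)) / (∑ i, e (y i)))
      = ∑ y : Fin (n+1) → Y, (∏ i, μ (y i)) * e (y 0) * ((∑ i, d (y i) * e (y i)) / (∑ i, e (y i))) := by
  classical
  apply Fintype.sum_equiv (Equiv.arrowCongr (Equiv.swap 0 j) (Equiv.refl Y))
  intro y
  have hc : ∀ i, (Equiv.arrowCongr (Equiv.swap 0 j) (Equiv.refl Y)) y i = y (Equiv.swap 0 j i) := by
    intro i
    simp [Equiv.arrowCongr, Equiv.swap_apply_def]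
  simp only [hc]
  rw [Equiv.prod_comp (Equiv.swap 0 j) (fun i => μ (y i)),
      Equiv.sum_comp (Equiv.swap 0 j) (fun i => d (y i) * e (y i)),
      Equiv.sum_comp (Equiv.swap 0 j) (fun i => e (y i)),
      Equiv.swap_apply_left]

lemma aux_main {Y : Type*} [Fintype Y] (M : ℕ) (μ e d : Y → ℝ)
    (hμsum : ∑ y, μ y = 1) (he : ∀ y, 0 < e y) :
    ∑ y : Fin (M+1) → Y, (∏ i, μ (y i)) * e (y 0) * ((∑ i, d (y i) * e (y i)) / (∑ i, e (y i)))
      = ∑ z, μ z * (d z * e z) := by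
  classical
  have hSpos : ∀ y : Fin (M+1) → Y, (0:ℝ) < ∑ i, e (y i) :=
    fun y => Finset.sum_pos (fun i _ => he _) ⟨0, Finset.mem_univ _⟩
  have hM : ((M:ℝ) + 1) ≠ 0 := by positivity
  apply mul_left_cancel₀ hM
  calc ((M:ℝ)+1) * ∑ y : Fin (M+1) → Y, (∏ i, μ (y i)) * e (y 0) * ((∑ i, d (y i) * e (y i)) / (∑ i, e (y i)))
      = ∑ j : Fin (M+1), ∑ y : Fin (M+1) → Y, (∏ i, μ (y i)) * e (y j) * ((∑ i, d (y i) * e (y i)) / (∑ i, e (y i))) := by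
        rw [Finset.sum_congr rfl fun j _ => aux_swap μ e d j]
        simp [Finset.sum_const, Finset.card_univ, nsmul_eq_mul]
    _ = ∑ y : Fin (M+1) → Y, (∏ i, μ (y i)) * (∑ i, d (y i) * e (y i)) := by
        rw [Finset.sum_comm]
        apply Finset.sum_congr rfl
        intro y _
        rw [← Finset.sum_mul, ← Finset.mul_sum]
        have hS := (hSpos y).ne'
        field_simp
    _ = ∑ j : Fin (M+1), ∑ z, μ z * (d z * e z) := by
        rw [Finset.sum_congr rfl fun (y : Fin (M+1) → Y) _ =>
          Finset.mul_sum Finset.univ (fun i => d (y i) * e (y i)) (∏ i, μ (y i)),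
          Finset.sum_comm]
        exact Finset.sum_congr rfl fun j _ => aux_marg μ (fun z => d z * e z) hμsum j
    _ = ((M:ℝ)+1) * ∑ z, μ z * (d z * e z) := by
        simp [Finset.sum_const, Finset.card_univ, nsmul_eq_mul]

theorem stmt_9 {Y : Type*} [Fintype Y] (M : ℕ) (μ : Y → ℝ)
    (hμ : ∀ y, 0 < μ y) (hμsum : ∑ y, μ y = 1)
    (r : ℝ → Y → ℝ) (θ : ℝ)
    (hr : ∀ z, DifferentiableAt ℝ (fun t => r t z) θ) :
    ∑ y : Fin (M + 1) → Y,
        (μ (y 0) * Real.exp (r θ (y 0)) / ∑ z, μ z * Real.exp (r θ z)) *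
          (∏ i ∈ Finset.univ.erase 0, μ (y i)) *
          deriv (fun t => Real.log ((1 / (M + 1 : ℝ)) * ∑ i, Real.exp (r t (y i)))) θ
      = deriv (fun t => Real.log (∑ z, μ z * Real.exp (r t z))) θ := by
  classical
  have hY : Nonempty Y := by
    rcases isEmpty_or_nonempty Y with h | h
    · simp at hμsum
    · exact h
  set e : Y → ℝ := fun z => Real.exp (r θ z) with he_def
  set d : Y → ℝ := fun z => deriv (fun t => r t z) θ with hd_def
  have hepos : ∀ z, 0 < e z := fun z => Real.exp_pos _
  have hZpos : (0:ℝ) < ∑ z, μ z * e z :=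
    Finset.sum_pos (fun z _ => mul_pos (hμ z) (hepos z)) Finset.univ_nonempty
  -- derivative of log Z
  have hZder : HasDerivAt (fun t => ∑ z, μ z * Real.exp (r t z)) (∑ z, μ z * (d z * e z)) θ := by
    refine HasDerivAt.fun_sum fun z _ => ?_
    have h1 : HasDerivAt (fun t => r t z) (d z) θ := (hr z).hasDerivAt
    have h2 := (h1.exp).const_mul (μ z)
    simpa [mul_comm] using h2
  have hRHS : deriv (fun t => Real.log (∑ z, μ z * Real.exp (r t z))) θ
      = (∑ z, μ z * (d z * e z)) / (∑ z, μ z * e z) := by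
    have h := hZder.log (by exact hZpos.ne')
    exact h.deriv
  -- derivative of log Ẑ
  have hLder : ∀ y : Fin (M+1) → Y,
      deriv (fun t => Real.log ((1 / (M + 1 : ℝ)) * ∑ i, Real.exp (r t (y i)))) θ
        = (∑ i, d (y i) * e (y i)) / (∑ i, e (y i)) := by
    intro y
    have hSpos : (0:ℝ) < ∑ i, e (y i) :=
      Finset.sum_pos (fun i _ => hepos _) ⟨0, Finset.mem_univ _⟩
    have hc : (0:ℝ) < 1 / (M + 1 : ℝ) := by positivity
    have hS : HasDerivAt (fun t => ∑ i, Real.exp (r t (y i))) (∑ i, d (y i) * e (y i)) θ := by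
      refine HasDerivAt.fun_sum fun i _ => ?_
      have h1 : HasDerivAt (fun t => r t (y i)) (d (y i)) θ := (hr (y i)).hasDerivAt
      simpa [mul_comm] using h1.exp
    have h := (hS.const_mul (1 / (M + 1 : ℝ))).log
      (by exact (mul_pos hc hSpos).ne')
    rw [h.deriv, mul_div_mul_left _ _ hc.ne']
  -- rewrite each term
  have hterm : ∀ y : Fin (M+1) → Y,
      (μ (y 0) * Real.exp (r θ (y 0)) / ∑ z, μ z * Real.exp (r θ z)) *
          (∏ i ∈ Finset.univ.erase 0, μ (y i)) *
          deriv (fun t => Real.log ((1 / (M + 1 : ℝ)) * ∑ i, Real.exp (r t (y i)))) θ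
        = ((∏ i, μ (y i)) * e (y 0) * ((∑ i, d (y i) * e (y i)) / (∑ i, e (y i))))
            / (∑ z, μ z * e z) := by
    intro y
    rw [hLder y, ← Finset.mul_prod_erase Finset.univ (fun i => μ (y i)) (Finset.mem_univ 0)]
    ring
  rw [Finset.sum_congr rfl fun y _ => hterm y, ← Finset.sum_div,
    aux_main M μ e d hμsum hepos, hRHS]
end

section
/- Let Y be a finite type, π_ref a strictly positive probability mass function on Y, r : Y → ℝ, and β > 0. Define π*(y) = π_ref(y)·exp(r(y)/β)/Z with Z = ∑_y π_ref(y)·exp(r(y)/β). Then π* is the unique maximizer over probability mass functions π (with support contained in Y) of the objective ∑_y π(y)·r(y) - β·∑_y π(y)·log(π(y)/π_ref(y)). -/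
theorem stmt_10 {Y : Type*} [Fintype Y] (πref : Y → ℝ)
    (href : ∀ y, 0 < πref y) (hrefsum : ∑ y, πref y = 1)
    (r : Y → ℝ) (β : ℝ) (hβ : 0 < β)
    (πstar : Y → ℝ)
    (hπstar : ∀ y, πstar y =
      πref y * Real.exp (r y / β) / ∑ y', πref y' * Real.exp (r y' / β)) :
    (∀ π : Y → ℝ, (∀ y, 0 ≤ π y) → ∑ y, π y = 1 →
      (∑ y, π y * r y) - β * ∑ y, π y * Real.log (π y / πref y) ≤
        (∑ y, πstar y * r y) - β * ∑ y, πstar y * Real.log (πstar y / πref y)) ∧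
    (∀ π : Y → ℝ, (∀ y, 0 ≤ π y) → ∑ y, π y = 1 →
      (∑ y, π y * r y) - β * ∑ y, π y * Real.log (π y / πref y) =
        (∑ y, πstar y * r y) - β * ∑ y, πstar y * Real.log (πstar y / πref y) →
      π = πstar) := by
  classical
  have hNE : Nonempty Y := by
    by_contra h
    rw [not_nonempty_iff] at h
    simp at hrefsum
  set Z := ∑ y', πref y' * Real.exp (r y' / β) with hZ
  have hZpos : 0 < Z :=
    Finset.sum_pos (fun y _ => mul_pos (href y) (Real.exp_pos _)) Finset.univ_nonempty
  have hπpos : ∀ y, 0 < πstar y := fun y => by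
    rw [hπstar y]; exact div_pos (mul_pos (href y) (Real.exp_pos _)) hZpos
  have hπsum : ∑ y, πstar y = 1 := by
    simp_rw [hπstar]
    rw [← Finset.sum_div, div_self hZpos.ne']
  have hlog : ∀ y, r y / β = Real.log (πstar y / πref y) + Real.log Z := by
    intro y
    have h1 : πstar y / πref y = Real.exp (r y / β) / Z := by
      rw [hπstar y, div_right_comm, mul_div_cancel_left₀ _ (href y).ne']
    rw [h1, Real.log_div (Real.exp_ne_zero _) hZpos.ne', Real.log_exp]; ring
  have keyeq : ∀ y, πstar y * (r y / β - Real.log (πstar y / πref y))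
      = πstar y * Real.log Z := by
    intro y; rw [hlog y]; ring
  have keystrict : ∀ y (p : ℝ), 0 ≤ p → p ≠ πstar y →
      p * (r y / β - Real.log (p / πref y)) < p * Real.log Z + (πstar y - p) := by
    intro y p hp hne
    rcases eq_or_lt_of_le hp with h0 | h0
    · simp [← h0]
      exact hπpos y
    · have hrw : r y / β - Real.log (p / πref y)
          = Real.log Z + Real.log (πstar y / p) := by
        rw [hlog y, Real.log_div h0.ne' (href y).ne',
          Real.log_div (hπpos y).ne' (href y).ne',
          Real.log_div (hπpos y).ne' h0.ne']
        ring
      rw [hrw, mul_add]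
      have hq : 0 < πstar y / p := div_pos (hπpos y) h0
      have hq1 : πstar y / p ≠ 1 := by
        intro h
        apply hne
        field_simp at h
        linarith
      have h2 : p * Real.log (πstar y / p) < p * (πstar y / p - 1) :=
        mul_lt_mul_of_pos_left (Real.log_lt_sub_one_of_pos hq hq1) h0
      have h3 : p * (πstar y / p - 1) = πstar y - p := by field_simp
      linarith
  have key : ∀ y (p : ℝ), 0 ≤ p →
      p * (r y / β - Real.log (p / πref y)) ≤ p * Real.log Z + (πstar y - p) := by
    intro y p hp
    by_cases h : p = πstar y
    · subst h
      rw [keyeq y]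
      simp
    · exact (keystrict y p hp h).le
  have obj : ∀ π : Y → ℝ,
      (∑ y, π y * r y) - β * ∑ y, π y * Real.log (π y / πref y)
      = β * ∑ y, π y * (r y / β - Real.log (π y / πref y)) := by
    intro π
    rw [Finset.mul_sum, Finset.mul_sum, ← Finset.sum_sub_distrib]
    apply Finset.sum_congr rfl
    intro y _
    field_simp
  have hstarval : ∑ y, πstar y * (r y / β - Real.log (πstar y / πref y))
      = Real.log Z := by
    rw [Finset.sum_congr rfl (fun y _ => keyeq y), ← Finset.sum_mul, hπsum, one_mul]
  have hbound : ∀ π : Y → ℝ, (∀ y, 0 ≤ π y) → ∑ y, π y = 1 →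
      ∑ y, (π y * Real.log Z + (πstar y - π y)) = Real.log Z := by
    intro π hpos hsum
    rw [Finset.sum_add_distrib, ← Finset.sum_mul, hsum, one_mul,
      Finset.sum_sub_distrib, hπsum, hsum]
    ring
  constructor
  · intro π hpos hsum
    rw [obj π, obj πstar, hstarval]
    apply mul_le_mul_of_nonneg_left _ hβ.le
    calc ∑ y, π y * (r y / β - Real.log (π y / πref y))
        ≤ ∑ y, (π y * Real.log Z + (πstar y - π y)) :=
          Finset.sum_le_sum (fun y _ => key y (π y) (hpos y))
      _ = Real.log Z := hbound π hpos hsum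
  · intro π hpos hsum heq
    by_contra hne
    obtain ⟨y0, hy0⟩ : ∃ y, π y ≠ πstar y := by
      by_contra h
      push_neg at h
      exact hne (funext h)
    have hlt : ∑ y, π y * (r y / β - Real.log (π y / πref y))
        < ∑ y, (π y * Real.log Z + (πstar y - π y)) :=
      Finset.sum_lt_sum (fun y _ => key y (π y) (hpos y))
        ⟨y0, Finset.mem_univ _, keystrict y0 (π y0) (hpos y0) hy0⟩
    rw [obj π, obj πstar, hstarval] at heq
    rw [hbound π hpos hsum] at hlt
    have := mul_lt_mul_of_pos_left hlt hβ
    linarith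
end
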